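/- There exists a constant C₀ ∈ (0,∞), depending only on a, such that for all x, y ∈ (0,∞) and all ε ∈ (0,1): | Ψ^x(ε,y) − 𝟙_{(0,x]}(y) | ≤ C₀ ( Ψ^{x e^{a√ε}}(ε,y) − Ψ^{x e^{-a√ε}}(ε,y) ), where 𝟙_{(0,x]} denotes the indicator function of the interval (0,x]. -/

import Mathlib

open MeasureTheory Real Set

/-- Gaussian heat kernel `p_t(z) = (2πt)^{-1/2} exp(-z²/(2t))`. -/
noncomputable def heatK (t z : ℝ) : ℝ :=
  (Real.sqrt (2 * Real.pi * t))⁻¹ * Real.exp (-(z ^ 2) / (2 * t))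

/-- `q_t(x,y) = (1/(ax)) p_t(log x /a - log y /a + at/2)`. -/
noncomputable def qker (a t x y : ℝ) : ℝ :=
  (a * x)⁻¹ * heatK t (Real.log x / a - Real.log y / a + a * t / 2)

/-- `q̂_t(x,y) = (1/(ax)) p_t(log x /a - log y /a - at/2)`. -/
noncomputable def qhat (a t x y : ℝ) : ℝ :=
  (a * x)⁻¹ * heatK t (Real.log x / a - Real.log y / a - a * t / 2)

/-- `θ(x,y,t) = log x /a - log y /a - at/2`. -/
noncomputable def theta (a x y t : ℝ) : ℝ :=
  Real.log x / a - Real.log y / a - a * t / 2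

/-- `Ψ^x(t,y) = ∫_0^x q̂_t(z,y) dz`. -/
noncomputable def Psi (a x t y : ℝ) : ℝ := ∫ z in Set.Ioc (0:ℝ) x, qhat a t z y

/-- standard normal cdf `Φ(ξ) = ∫_{-∞}^ξ p_1(z) dz`. -/
noncomputable def Phi (ξ : ℝ) : ℝ := ∫ z in Set.Iic ξ, heatK 1 z

lemma heatK_one_def (z : ℝ) :
    heatK 1 z = (Real.sqrt (2 * Real.pi))⁻¹ * Real.exp (-(1/2) * z ^ 2) := by
  unfold heatK
  rw [mul_one]
  congr 1
  ring_nf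

lemma heatK_pos (z : ℝ) : 0 < heatK 1 z := by
  rw [heatK_one_def]
  have : 0 < Real.sqrt (2 * Real.pi) := Real.sqrt_pos.mpr (by positivity)
  positivity

lemma heatK_nonneg (z : ℝ) : 0 ≤ heatK 1 z := (heatK_pos z).le

lemma heatK_fun_eq : heatK 1 = fun z => (Real.sqrt (2 * Real.pi))⁻¹ * Real.exp (-(1/2) * z ^ 2) :=
  funext heatK_one_def

lemma heatK_integrable : Integrable (heatK 1) := by
  rw [heatK_fun_eq]
  exact (integrable_exp_neg_mul_sq (by norm_num)).const_mul _

lemma heatK_integral : ∫ z, heatK 1 z = 1 := by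
  rw [heatK_fun_eq]
  rw [MeasureTheory.integral_const_mul, integral_gaussian,
    show (Real.pi / (1/2)) = 2 * Real.pi by ring]
  have : 0 < Real.sqrt (2 * Real.pi) := Real.sqrt_pos.mpr (by positivity)
  field_simp

lemma Phi_mono : Monotone Phi := by
  intro s t hst
  exact setIntegral_mono_set heatK_integrable.integrableOn
    (Filter.Eventually.of_forall heatK_nonneg)
    (HasSubset.Subset.eventuallyLE (Iic_subset_Iic.mpr hst))

lemma Phi_add_Ioi (ξ : ℝ) : Phi ξ + ∫ z in Ioi ξ, heatK 1 z = 1 := by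
  rw [Phi, intervalIntegral.integral_Iic_add_Ioi heatK_integrable.integrableOn heatK_integrable.integrableOn,
    heatK_integral]

lemma Phi_le_one (ξ : ℝ) : Phi ξ ≤ 1 := by
  rw [← Phi_add_Ioi ξ]
  have : 0 ≤ ∫ z in Ioi ξ, heatK 1 z :=
    setIntegral_nonneg measurableSet_Ioi fun z _ => heatK_nonneg z
  linarith

lemma Phi_nonneg (ξ : ℝ) : 0 ≤ Phi ξ :=
  setIntegral_nonneg measurableSet_Iic fun z _ => heatK_nonneg z

lemma Phi_neg (ξ : ℝ) : Phi (-ξ) = 1 - Phi ξ := by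
  have h1 : Phi (-ξ) = ∫ z in Iic (-ξ), heatK 1 (-z) := by
    rw [Phi]
    refine setIntegral_congr_fun measurableSet_Iic fun z _ => ?_
    rw [heatK_one_def, heatK_one_def, neg_sq]
  rw [h1, integral_comp_neg_Iic, neg_neg]
  have := Phi_add_Ioi ξ
  linarith

lemma integral_Ioi_comp_add_one (c : ℝ) (f : ℝ → ℝ) :
    (∫ x in Ioi c, f (x + 1)) = ∫ x in Ioi (c + 1), f x := by
  have A : MeasurableEmbedding fun x : ℝ => x + 1 :=
    (Homeomorph.addRight (1:ℝ)).isClosedEmbedding.measurableEmbedding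
  have := MeasurableEmbedding.setIntegral_map (μ := volume) A f (Ioi (c + 1))
  rw [map_add_right_eq_self volume (1:ℝ)] at this
  rw [this]
  congr 1
  ext x
  simp

lemma tail_decay {ξ : ℝ} (hξ : 0 ≤ ξ) :
    (∫ z in Ioi (ξ + 1), heatK 1 z) ≤ Real.exp (-(1/2)) * ∫ z in Ioi ξ, heatK 1 z := by
  rw [← integral_Ioi_comp_add_one]
  rw [← MeasureTheory.integral_const_mul]
  refine setIntegral_mono_on ((heatK_integrable.comp_add_right 1).integrableOn)
    ((heatK_integrable.const_mul _).integrableOn) measurableSet_Ioi fun z hz => ?_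
  have hz0 : (0:ℝ) ≤ z := le_trans hξ (le_of_lt hz)
  rw [heatK_one_def, heatK_one_def]
  rw [show Real.exp (-(1/2)) * ((Real.sqrt (2*Real.pi))⁻¹ * Real.exp (-(1/2) * z^2))
      = (Real.sqrt (2*Real.pi))⁻¹ * Real.exp (-(1/2) * z^2 + -(1/2)) by
    rw [Real.exp_add]; ring]
  refine mul_le_mul_of_nonneg_left ?_ (by positivity)
  refine Real.exp_le_exp.mpr ?_
  nlinarith

lemma tailA {ξ : ℝ} (hξ : 0 ≤ ξ) :
    1 - Phi ξ ≤ (1 - Real.exp (-(1/2)))⁻¹ * (Phi (ξ + 1) - Phi ξ) := by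
  set r : ℝ := Real.exp (-(1/2)) with hr
  have hr1 : r < 1 := by
    rw [hr, Real.exp_lt_one_iff]; norm_num
  have hr0 : 0 < r := Real.exp_pos _
  have h1 := Phi_add_Ioi ξ
  have h2 := Phi_add_Ioi (ξ + 1)
  have h3 := tail_decay hξ
  have key : (1 - r) * (1 - Phi ξ) ≤ Phi (ξ + 1) - Phi ξ := by nlinarith
  have hne : (1 : ℝ) - r ≠ 0 := by linarith
  calc 1 - Phi ξ = (1 - r)⁻¹ * ((1 - r) * (1 - Phi ξ)) := by
        rw [← mul_assoc, inv_mul_cancel₀ hne, one_mul]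
      _ ≤ (1 - r)⁻¹ * (Phi (ξ + 1) - Phi ξ) :=
        mul_le_mul_of_nonneg_left key (inv_nonneg.mpr (by linarith))

lemma compactB {b ξ : ℝ} (hb : 0 < b) (hξl : -b ≤ ξ) (hξu : ξ ≤ 0) :
    1 - Phi ξ ≤ (heatK 1 (max b 1))⁻¹ * (Phi (ξ + 1) - Phi ξ) := by
  have hm : 0 < heatK 1 (max b 1) := heatK_pos _
  have hdiff : Phi (ξ + 1) - Phi ξ = ∫ z in Ioc ξ (ξ + 1), heatK 1 z := by
    rw [Phi, Phi, intervalIntegral.integral_Iic_sub_Iic heatK_integrable.integrableOn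
      heatK_integrable.integrableOn, intervalIntegral.integral_of_le (by linarith)]
  have hpt : ∀ z ∈ Ioc ξ (ξ + 1), heatK 1 (max b 1) ≤ heatK 1 z := by
    intro z hz
    rw [heatK_one_def, heatK_one_def]
    refine mul_le_mul_of_nonneg_left (Real.exp_le_exp.mpr ?_) (by positivity)
    have h1 : |z| ≤ max b 1 := by
      rw [abs_le]
      constructor
      · calc -(max b 1) ≤ -b := by simp
          _ ≤ ξ := hξl
          _ ≤ z := hz.1.le
      · calc z ≤ ξ + 1 := hz.2
          _ ≤ 1 := by linarith
          _ ≤ max b 1 := le_max_right _ _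
    have h2 : z ^ 2 ≤ (max b 1) ^ 2 := by
      rw [← sq_abs z]
      exact pow_le_pow_left₀ (abs_nonneg z) h1 2
    nlinarith
  have hlow : heatK 1 (max b 1) * 1 ≤ ∫ z in Ioc ξ (ξ + 1), heatK 1 z := by
    have := setIntegral_ge_of_const_le (μ := volume) (s := Ioc ξ (ξ + 1))
      (c := heatK 1 (max b 1)) measurableSet_Ioc (by simp) hpt
      heatK_integrable.integrableOn
    simpa using this
  rw [hdiff]
  calc 1 - Phi ξ ≤ 1 := by linarith [Phi_nonneg ξ]
    _ = (heatK 1 (max b 1))⁻¹ * (heatK 1 (max b 1) * 1) := by field_simp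
    _ ≤ _ := mul_le_mul_of_nonneg_left hlow (inv_nonneg.mpr hm.le)

lemma combinedTail {b : ℝ} (hb : 0 < b) :
    ∃ C : ℝ, 0 < C ∧ ∀ ξ : ℝ, -b ≤ ξ → 1 - Phi ξ ≤ C * (Phi (ξ + 1) - Phi ξ) := by
  refine ⟨max (1 - Real.exp (-(1/2)))⁻¹ (heatK 1 (max b 1))⁻¹, ?_, fun ξ hξ => ?_⟩
  · have : Real.exp (-(1/2):ℝ) < 1 := by rw [Real.exp_lt_one_iff]; norm_num
    exact lt_max_of_lt_left (inv_pos.mpr (by linarith))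
  have hmono : Phi ξ ≤ Phi (ξ + 1) := Phi_mono (by linarith)
  rcases le_or_gt 0 ξ with h | h
  · calc 1 - Phi ξ ≤ (1 - Real.exp (-(1/2)))⁻¹ * (Phi (ξ + 1) - Phi ξ) := tailA h
      _ ≤ _ := mul_le_mul_of_nonneg_right (le_max_left _ _) (by linarith)
  · calc 1 - Phi ξ ≤ (heatK 1 (max b 1))⁻¹ * (Phi (ξ + 1) - Phi ξ) := compactB hb hξ h.le
      _ ≤ _ := mul_le_mul_of_nonneg_right (le_max_right _ _) (by linarith)

lemma heatK_scale {ε : ℝ} (hε : 0 < ε) (u : ℝ) :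
    Real.sqrt ε * heatK ε (Real.sqrt ε * u) = heatK 1 u := by
  have hs : (0:ℝ) < Real.sqrt ε := Real.sqrt_pos.mpr hε
  rw [heatK_one_def]
  unfold heatK
  have h1 : Real.sqrt (2 * Real.pi * ε) = Real.sqrt (2 * Real.pi) * Real.sqrt ε :=
    Real.sqrt_mul (by positivity) ε
  have h2 : -((Real.sqrt ε * u) ^ 2) / (2 * ε) = -(1/2) * u ^ 2 := by
    rw [mul_pow, Real.sq_sqrt hε.le]
    field_simp
  rw [h1, h2, mul_inv]
  have hsp : 0 < Real.sqrt (2 * Real.pi) := Real.sqrt_pos.mpr (by positivity)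
  field_simp

lemma Psi_eq {a x y ε : ℝ} (ha : 0 < a) (hx : 0 < x) (hy : 0 < y) (hε : 0 < ε) :
    Psi a x ε y = Phi (theta a x y ε / Real.sqrt ε) := by
  set s : ℝ := Real.sqrt ε with hsdef
  have hs : (0:ℝ) < s := Real.sqrt_pos.mpr hε
  set d : ℝ := Real.log y / a + a * ε / 2 with hd
  set ξ : ℝ := theta a x y ε / s with hξ
  have hsξ : s * ξ = theta a x y ε := by
    rw [hξ]; field_simp
  set f : ℝ → ℝ := fun u => Real.exp (a * (s * u + d)) with hfdef
  have hfx : f ξ = x := by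
    have : a * (s * ξ + d) = Real.log x := by
      rw [hsξ, theta, hd]; field_simp; ring
    rw [hfdef]; simp only []
    rw [this, Real.exp_log hx]
  have hfpos : ∀ u, 0 < f u := fun u => Real.exp_pos _
  have hderiv : ∀ u ∈ Iic ξ, HasDerivWithinAt f ((a * s) * f u) (Iic ξ) u := by
    intro u _
    have h0 : HasDerivAt (fun u : ℝ => a * (s * u + d)) (a * s) u := by
      have heq : (fun u : ℝ => a * (s * u + d)) = fun u : ℝ => a * s * u + a * d := by
        funext u; ring
      rw [heq]
      simpa using ((hasDerivAt_id u).const_mul (a * s)).add_const (a * d)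
    have := h0.exp
    rw [mul_comm] at this
    exact this.hasDerivWithinAt
  have hmono : StrictMono f := by
    intro u v huv
    exact Real.exp_lt_exp.mpr (by nlinarith [mul_pos (mul_pos ha hs) (sub_pos.mpr huv)])
  have hinj : InjOn f (Iic ξ) := hmono.injective.injOn
  have himg : f '' Iic ξ = Ioc 0 x := by
    ext z
    constructor
    · rintro ⟨u, hu, rfl⟩
      exact ⟨hfpos u, hfx ▸ (hmono.monotone hu)⟩
    · rintro ⟨hz0, hzx⟩
      refine ⟨(Real.log z / a - d) / s, ?_, ?_⟩
      · rw [mem_Iic]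
        have hlog : Real.log z ≤ Real.log x := Real.log_le_log hz0 hzx
        have : (Real.log z / a - d) ≤ s * ξ := by
          rw [hsξ, theta, hd]
          have : Real.log z / a ≤ Real.log x / a := by gcongr
          linarith
        calc (Real.log z / a - d) / s ≤ (s * ξ) / s := by gcongr
          _ = ξ := by field_simp
      · rw [hfdef]; simp only []
        rw [show a * (s * ((Real.log z / a - d) / s) + d) = Real.log z by field_simp; ring]
        exact Real.exp_log hz0
  have hcov := integral_image_eq_integral_abs_deriv_smul measurableSet_Iic hderiv hinj
    (fun z => qhat a ε z y)
  rw [Psi, ← himg, hcov, Phi]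
  refine setIntegral_congr_fun measurableSet_Iic fun u _ => ?_
  have harg : Real.log (f u) / a - Real.log y / a - a * ε / 2 = s * u := by
    rw [hfdef]; simp only []
    rw [Real.log_exp, hd]
    field_simp
    ring
  rw [qhat, harg, smul_eq_mul]
  rw [abs_of_pos (by positivity : (0:ℝ) < a * s * f u)]
  rw [show a * s * f u * ((a * f u)⁻¹ * heatK ε (s * u)) = s * heatK ε (s * u) by
    field_simp [(hfpos u).ne']]
  exact heatK_scale hε u

theorem indicator_mollification_bound (a : ℝ) (ha : 0 < a) :
    ∃ C₀ : ℝ, 0 < C₀ ∧ ∀ x ∈ Set.Ioi (0:ℝ), ∀ y ∈ Set.Ioi (0:ℝ), ∀ ε ∈ Set.Ioo (0:ℝ) 1,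
      |Psi a x ε y - Set.indicator (Set.Ioc (0:ℝ) x) (fun _ => (1:ℝ)) y|
        ≤ C₀ * (Psi a (x * Real.exp (a * Real.sqrt ε)) ε y
            - Psi a (x * Real.exp (-(a * Real.sqrt ε))) ε y) := by
  obtain ⟨C, hC, hCb⟩ := combinedTail (show (0:ℝ) < a / 2 by linarith)
  refine ⟨C, hC, fun x hx y hy ε hε => ?_⟩
  rw [mem_Ioi] at hx hy
  obtain ⟨hε0, hε1⟩ := hε
  set s : ℝ := Real.sqrt ε with hsdef
  have hs : (0:ℝ) < s := Real.sqrt_pos.mpr hε0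
  have hs1 : s ≤ 1 := by
    rw [hsdef, show (1:ℝ) = Real.sqrt 1 by simp]
    exact Real.sqrt_le_sqrt hε1.le
  have hss : s * s = ε := Real.mul_self_sqrt hε0.le
  set ξ : ℝ := theta a x y ε / s with hξ
  have hPsix : Psi a x ε y = Phi ξ := Psi_eq ha hx hy hε0
  have hPsip : Psi a (x * Real.exp (a * s)) ε y = Phi (ξ + 1) := by
    rw [Psi_eq ha (mul_pos hx (Real.exp_pos _)) hy hε0]
    congr 1
    rw [hξ]
    simp only [theta]
    rw [Real.log_mul hx.ne' (Real.exp_ne_zero _), Real.log_exp]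
    field_simp
    ring
  have hPsim : Psi a (x * Real.exp (-(a * s))) ε y = Phi (ξ - 1) := by
    rw [Psi_eq ha (mul_pos hx (Real.exp_pos _)) hy hε0]
    congr 1
    rw [hξ]
    simp only [theta]
    rw [Real.log_mul hx.ne' (Real.exp_ne_zero _), Real.log_exp]
    field_simp
    ring
  have hξL : ξ = (Real.log x - Real.log y) / (a * s) - a * s / 2 := by
    rw [hξ]
    simp only [theta]
    rw [← hss]
    field_simp
  have hmono : Phi (ξ - 1) ≤ Phi ξ := Phi_mono (by linarith)
  have hmono2 : Phi ξ ≤ Phi (ξ + 1) := Phi_mono (by linarith)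
  rw [hPsix, hPsip, hPsim]
  rcases le_or_gt y x with hyx | hxy
  · -- y ∈ Ioc 0 x, indicator = 1
    have hmem : y ∈ Set.Ioc (0:ℝ) x := ⟨hy, hyx⟩
    rw [Set.indicator_of_mem hmem]
    have hL : 0 ≤ Real.log x - Real.log y := by
      have := Real.log_le_log hy hyx
      linarith
    have hξge : -(a / 2) ≤ ξ := by
      rw [hξL]
      have h1 : 0 ≤ (Real.log x - Real.log y) / (a * s) := by positivity
      have h2 : a * s / 2 ≤ a / 2 := by nlinarith
      linarith
    have hb := hCb ξ hξge
    rw [abs_of_nonpos (by linarith [Phi_le_one ξ])]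
    have : C * (Phi (ξ + 1) - Phi ξ) ≤ C * (Phi (ξ + 1) - Phi (ξ - 1)) := by
      apply mul_le_mul_of_nonneg_left _ hC.le
      linarith
    linarith
  · -- y > x, indicator = 0
    rw [Set.indicator_of_notMem (by simp [hxy, not_le] : y ∉ Set.Ioc (0:ℝ) x)]
    have hL : Real.log x - Real.log y < 0 := by
      have := Real.log_lt_log hx hxy
      linarith
    have hξneg : ξ < 0 := by
      rw [hξL]
      have h1 : (Real.log x - Real.log y) / (a * s) < 0 :=
        div_neg_of_neg_of_pos hL (by positivity)
      nlinarith
    have hb := hCb (-ξ) (by linarith)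
    rw [Phi_neg] at hb
    rw [show -ξ + 1 = -(ξ - 1) by ring, Phi_neg] at hb
    rw [sub_zero, abs_of_nonneg (Phi_nonneg ξ)]
    have : C * (Phi ξ - Phi (ξ - 1)) ≤ C * (Phi (ξ + 1) - Phi (ξ - 1)) := by
      apply mul_le_mul_of_nonneg_left _ hC.le
      linarith
    linarith
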